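/- Assume the constraint h^(2) − 2h_1 = z² holds in R((z⁻¹)), and assume that the three elements h_3 − h_1², h_4 − h_1h_2, h_5 − h_1h_3 of R are constants, i.e. are annihilated by d. Then (d(h_1))² = 4h_1³ + 8(h_3 − h_1²)·h_1 + 8(h_5 − h_1h_3); in other words, under the KdV reduction H^(2) = z² with the higher flow stationary, h_1 satisfies the Weierstrass equation of an elliptic curve. -/

import Mathlib

/-
We model the ring `R((z⁻¹))` of formal Laurent series in `z⁻¹` over `R`
as `HahnSeries ℤ R`, with the convention that the index `n : ℤ` records the
coefficient of `z^(-n)`; thus the coefficient of `zᵐ` in `f` is `f.coeff (-m)`,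
`z = HahnSeries.single (-1) 1`, and `h_l = h.coeff l` for `l ≥ 1`.
-/

/-- The coefficientwise extension of an additive map `d : R → R` to `R((z⁻¹))`. -/
noncomputable def coeffExt {R : Type*} [CommRing R] (d : R →+ R)
    (f : HahnSeries ℤ R) : HahnSeries ℤ R where
  coeff n := d (f.coeff n)
  isPWO_support' := f.isPWO_support'.mono (fun n hn => by
    simp only [Function.mem_support] at hn ⊢
    exact fun h => hn (by rw [h, map_zero]))

/-- The Faà di Bruno iterates `h^(0) = 1`, `h^(k+1) = d(h^(k)) + h * h^(k)` in `R((z⁻¹))`. -/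
noncomputable def fdb {R : Type*} [CommRing R] (d : R →+ R)
    (h : HahnSeries ℤ R) : ℕ → HahnSeries ℤ R
  | 0 => 1
  | k + 1 => coeffExt d (fdb d h k) + h * fdb d h k

lemma coeffExt_coeff {R : Type*} [CommRing R] (d : R →+ R)
    (f : HahnSeries ℤ R) (n : ℤ) : (coeffExt d f).coeff n = d (f.coeff n) := rfl

lemma mul_coeff_zero {R : Type*} [CommRing R] (f g : HahnSeries ℤ R) (A B : ℤ)
    (hf : ∀ i, i < A → f.coeff i = 0) (hg : ∀ j, j < B → g.coeff j = 0)
    (n : ℤ) (hn : n < A + B) : (f * g).coeff n = 0 := by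
  by_contra hne
  have hmem : n ∈ (f * g).support := hne
  obtain ⟨i, hi, j, hj, rfl⟩ := HahnSeries.support_mul_subset hmem
  have hiA : A ≤ i := le_of_not_gt fun hlt => hi (hf i hlt)
  have hjB : B ≤ j := le_of_not_gt fun hlt => hj (hg j hlt)
  have hn' : i + j < A + B := hn
  omega

/-- Let `h = z + Σ_{l ≥ 1} h_l z^(-l)` in `R((z⁻¹))`.  Assume the KdV
constraint `h^(2) - 2h_1 = z²` and that `h_3 - h_1²`, `h_4 - h_1h_2`,
`h_5 - h_1h_3` are constants (annihilated by `d`).  Then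
`(d h_1)² = 4h_1³ + 8(h_3 - h_1²)h_1 + 8(h_5 - h_1h_3)`:
`h_1` satisfies the Weierstrass equation of an elliptic curve. -/
theorem kdv_stationary_weierstrass
    {R : Type*} [CommRing R] (d : R →+ R)
    (hd : ∀ a b : R, d (a * b) = a * d b + d a * b)
    (h : HahnSeries ℤ R)
    (hz : h.coeff (-1) = 1)
    (h0 : h.coeff 0 = 0)
    (hpos : ∀ m : ℤ, 2 ≤ m → h.coeff (-m) = 0)
    (constraint : fdb d h 2 - HahnSeries.C (2 * h.coeff 1) =
      (HahnSeries.single (-1 : ℤ) (1 : R)) ^ 2)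
    (st1 : d (h.coeff 3 - h.coeff 1 ^ 2) = 0)
    (st2 : d (h.coeff 4 - h.coeff 1 * h.coeff 2) = 0)
    (st3 : d (h.coeff 5 - h.coeff 1 * h.coeff 3) = 0) :
    (d (h.coeff 1)) ^ 2 = 4 * h.coeff 1 ^ 3
      + 8 * (h.coeff 3 - h.coeff 1 ^ 2) * h.coeff 1
      + 8 * (h.coeff 5 - h.coeff 1 * h.coeff 3) := by
  set a1 := h.coeff 1 with ha1
  set a2 := h.coeff 2 with ha2
  set a3 := h.coeff 3 with ha3
  set a4 := h.coeff 4 with ha4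
  set a5 := h.coeff 5 with ha5
  have hd1 : d (1 : R) = 0 := by
    have := hd 1 1
    simp only [one_mul, mul_one] at this
    linear_combination -this
  -- simplify fdb
  have hext1 : coeffExt d (1 : HahnSeries ℤ R) = 0 := by
    ext n
    rw [coeffExt_coeff]
    by_cases hn : n = 0 <;> simp [hn, hd1]
  have h1eq : fdb d h 1 = h := by
    show coeffExt d (fdb d h 0) + h * fdb d h 0 = h
    show coeffExt d 1 + h * 1 = h
    rw [hext1, mul_one, zero_add]
  have h2eq : fdb d h 2 = coeffExt d h + h * h := by
    show coeffExt d (fdb d h 1) + h * fdb d h 1 = _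
    rw [h1eq]
  rw [h2eq] at constraint
  -- decompose h
  set u : HahnSeries ℤ R := HahnSeries.single (-1) 1 + HahnSeries.single 1 a1
    + HahnSeries.single 2 a2 + HahnSeries.single 3 a3 + HahnSeries.single 4 a4
    + HahnSeries.single 5 a5 with hu
  set r : HahnSeries ℤ R := h - u with hr
  have hrc : ∀ j : ℤ, j < 6 → r.coeff j = 0 := by
    intro j hj
    rw [hr]
    simp only [hu, HahnSeries.coeff_sub, HahnSeries.coeff_add, HahnSeries.coeff_single]
    rcases lt_or_ge j (-1) with hlt | hge
    · have h2le : (2:ℤ) ≤ -j := by omega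
      have hcz := hpos (-j) h2le
      rw [neg_neg] at hcz
      rw [hcz, if_neg (by omega : ¬ j = -1), if_neg (by omega : ¬ j = 1),
        if_neg (by omega : ¬ j = 2), if_neg (by omega : ¬ j = 3),
        if_neg (by omega : ¬ j = 4), if_neg (by omega : ¬ j = 5)]
      ring
    · interval_cases j <;> simp_all
  have huc : ∀ i : ℤ, i < -1 → u.coeff i = 0 := by
    intro i hi
    simp only [hu, HahnSeries.coeff_add, HahnSeries.coeff_single]
    have h1 : ¬ i = -1 := by omega
    have h2 : ¬ i = 1 := by omega
    have h3 : ¬ i = 2 := by omega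
    have h4 : ¬ i = 3 := by omega
    have h5 : ¬ i = 4 := by omega
    have h6 : ¬ i = 5 := by omega
    simp [h1, h2, h3, h4, h5, h6]
  have hsq : ∀ n : ℤ, n < 5 → (h * h).coeff n = (u * u).coeff n := by
    intro n hn
    have hhu : h = u + r := by rw [hr]; ring
    rw [hhu]
    have e1 : (u * r).coeff n = 0 := mul_coeff_zero u r (-1) 6 huc hrc n (by omega)
    have e2 : (r * u).coeff n = 0 := mul_coeff_zero r u 6 (-1) hrc huc n (by omega)
    have e3 : (r * r).coeff n = 0 := mul_coeff_zero r r 6 6 hrc hrc n (by omega)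
    have : (u + r) * (u + r) = u * u + (u * r + (r * u + r * r)) := by ring
    rw [this]
    simp [HahnSeries.coeff_add, e1, e2, e3]
  -- coefficient extraction
  have hcoef : ∀ n : ℤ, ((coeffExt d h + h * h) - HahnSeries.C (2 * a1)).coeff n
      = ((HahnSeries.single (-1 : ℤ) (1 : R)) ^ 2).coeff n := fun n => by rw [constraint]
  have hrhs : (HahnSeries.single (-1 : ℤ) (1 : R)) ^ 2 = HahnSeries.single (-2) 1 := by
    rw [sq, HahnSeries.single_mul_single]
    norm_num
  have uu : u * u = HahnSeries.single (-2) (1*1)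
      + HahnSeries.single 0 (1*a1) + HahnSeries.single 1 (1*a2) + HahnSeries.single 2 (1*a3)
      + HahnSeries.single 3 (1*a4) + HahnSeries.single 4 (1*a5)
      + HahnSeries.single 0 (a1*1) + HahnSeries.single 2 (a1*a1) + HahnSeries.single 3 (a1*a2)
      + HahnSeries.single 4 (a1*a3) + HahnSeries.single 5 (a1*a4) + HahnSeries.single 6 (a1*a5)
      + HahnSeries.single 1 (a2*1) + HahnSeries.single 3 (a2*a1) + HahnSeries.single 4 (a2*a2)
      + HahnSeries.single 5 (a2*a3) + HahnSeries.single 6 (a2*a4) + HahnSeries.single 7 (a2*a5)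
      + HahnSeries.single 2 (a3*1) + HahnSeries.single 4 (a3*a1) + HahnSeries.single 5 (a3*a2)
      + HahnSeries.single 6 (a3*a3) + HahnSeries.single 7 (a3*a4) + HahnSeries.single 8 (a3*a5)
      + HahnSeries.single 3 (a4*1) + HahnSeries.single 5 (a4*a1) + HahnSeries.single 6 (a4*a2)
      + HahnSeries.single 7 (a4*a3) + HahnSeries.single 8 (a4*a4) + HahnSeries.single 9 (a4*a5)
      + HahnSeries.single 4 (a5*1) + HahnSeries.single 6 (a5*a1) + HahnSeries.single 7 (a5*a2)
      + HahnSeries.single 8 (a5*a3) + HahnSeries.single 9 (a5*a4) + HahnSeries.single 10 (a5*a5)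
      := by
    rw [hu]
    simp only [add_mul, mul_add, HahnSeries.single_mul_single]
    norm_num
    abel
  have Eat : ∀ n : ℤ, n < 5 → d (h.coeff n) + (u * u).coeff n
      - (HahnSeries.C (2 * a1)).coeff n = (HahnSeries.single (-2 : ℤ) (1 : R)).coeff n := by
    intro n hn
    have := hcoef n
    rw [hrhs] at this
    rw [HahnSeries.coeff_sub, HahnSeries.coeff_add, coeffExt_coeff, hsq n hn] at this
    exact this
  have E1 := Eat 1 (by norm_num)
  have E2 := Eat 2 (by norm_num)
  have E4 := Eat 4 (by norm_num)
  rw [uu, HahnSeries.C_apply] at E1 E2 E4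
  simp only [HahnSeries.coeff_add, HahnSeries.coeff_single] at E1 E2 E4
  norm_num at E1 E2 E4
  have hd4 : d a4 = a1 * d a2 + d a1 * a2 := by
    have := map_sub d a4 (a1 * a2)
    rw [st2] at this
    have h' := hd a1 a2
    linear_combination -this + h'
  linear_combination (d a1 + 2*a2) * E1 + 4*a1 * E2 - 4 * E4 + 4 * hd4
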